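/- Strict compatibility with the weight filtration: every morphism f : (V, W, F) → (V', W', F') of mixed Hodge structures is strictly compatible with the weight filtrations, i.e. f(W_n) = f(V) ∩ W'_n for every integer n. -/

import Mathlib

open scoped TensorProduct

private lemma sigmaC_aux (V : Type*) [AddCommGroup V] [Module ℝ V] (c : ℂ) (x : ℂ ⊗[ℝ] V) :
    TensorProduct.map Complex.conjAe.toLinearMap LinearMap.id (c • x) =
      (starRingEnd ℂ) c • TensorProduct.map Complex.conjAe.toLinearMap LinearMap.id x := by
  induction x using TensorProduct.induction_on with
  | zero => simp
  | tmul z v => simp [TensorProduct.smul_tmul', smul_eq_mul, map_mul]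
  | add x y hx hy => simp only [smul_add, map_add, hx, hy]

/-- The conjugation involution `σ` of the complexification `ℂ ⊗[ℝ] V`,
as a `conj`-semilinear map. -/
noncomputable def sigmaC (V : Type*) [AddCommGroup V] [Module ℝ V] :
    (ℂ ⊗[ℝ] V) →ₛₗ[starRingEnd ℂ] (ℂ ⊗[ℝ] V) where
  toFun := TensorProduct.map Complex.conjAe.toLinearMap LinearMap.id
  map_add' x y := map_add _ x y
  map_smul' c x := sigmaC_aux V c x

/-- A mixed Hodge structure on a real vector space `V`: an increasing, bounded, exhaustive
weight filtration `W` of `V` by real subspaces and a decreasing, bounded, exhaustive Hodge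
filtration `F` of `V_ℂ = ℂ ⊗[ℝ] V` by complex subspaces, such that for every `n` the
filtration induced by `F` on `Gr^W_n = W_n / W_{n-1}` is a Hodge filtration of weight `n`.

Identifying the complexification of `Gr^W_n` with `(W_n)_ℂ / (W_{n-1})_ℂ` (where
`(W_n)_ℂ := (W n).baseChange ℂ ⊆ V_ℂ`), the Hodge filtration condition of weight `n` on
`Gr^W_n` — namely `F^p(Gr^W_n)_ℂ ⊕ σ(F^{n-p+1}(Gr^W_n)_ℂ) = (Gr^W_n)_ℂ` for all `p`, where
`F^p(Gr^W_n)_ℂ` is the image of `F^p ⊓ (W_n)_ℂ` — is expressed below by pulling back along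
the quotient map `(W_n)_ℂ → (W_n)_ℂ / (W_{n-1})_ℂ`: the first displayed equation is the
disjointness of the two images in the quotient, the second their spanning of the quotient. -/
def IsMixedHodgeStructure (V : Type*) [AddCommGroup V] [Module ℝ V]
    (W : ℤ → Submodule ℝ V) (F : ℤ → Submodule ℂ (ℂ ⊗[ℝ] V)) : Prop :=
  Monotone W ∧
  (∃ a : ℤ, ∀ n ≤ a, W n = ⊥) ∧
  (∃ b : ℤ, ∀ n ≥ b, W n = ⊤) ∧
  (∀ p : ℤ, F (p + 1) ≤ F p) ∧
  (∃ a : ℤ, ∀ p ≤ a, F p = ⊤) ∧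
  (∃ b : ℤ, ∀ p ≥ b, F p = ⊥) ∧
  (∀ n p : ℤ,
    ((F p ⊓ (W n).baseChange ℂ) ⊔ (W (n - 1)).baseChange ℂ) ⊓
        (((F (n - p + 1) ⊓ (W n).baseChange ℂ).map (sigmaC V)) ⊔ (W (n - 1)).baseChange ℂ)
      = (W (n - 1)).baseChange ℂ ∧
    (F p ⊓ (W n).baseChange ℂ) ⊔ ((F (n - p + 1) ⊓ (W n).baseChange ℂ).map (sigmaC V))
        ⊔ (W (n - 1)).baseChange ℂ
      = (W n).baseChange ℂ)


namespace MHSaux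

variable {V : Type*} [AddCommGroup V] [Module ℝ V]

lemma sigmaC_tmul (z : ℂ) (v : V) : sigmaC V (z ⊗ₜ[ℝ] v) = (starRingEnd ℂ) z ⊗ₜ[ℝ] v := rfl

lemma sigmaC_sigmaC (x : ℂ ⊗[ℝ] V) : sigmaC V (sigmaC V x) = x := by
  induction x using TensorProduct.induction_on with
  | zero => simp
  | tmul z v => simp [sigmaC_tmul]
  | add x y hx hy => rw [map_add, map_add, hx, hy]

lemma sigmaC_surjective : Function.Surjective (sigmaC V) :=
  fun x => ⟨sigmaC V x, sigmaC_sigmaC x⟩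

lemma map_sigmaC_baseChange (p : Submodule ℝ V) :
    (p.baseChange ℂ).map (sigmaC V) = p.baseChange ℂ := by
  rw [Submodule.baseChange_eq_span, Submodule.map_span]
  congr 1
  ext x
  constructor
  · rintro ⟨y, ⟨m, hm, rfl⟩, rfl⟩
    exact ⟨m, hm, by simp [TensorProduct.mk_apply, sigmaC_tmul]⟩
  · rintro ⟨m, hm, rfl⟩
    exact ⟨(1:ℂ) ⊗ₜ[ℝ] m, ⟨m, hm, rfl⟩, by simp [TensorProduct.mk_apply, sigmaC_tmul]⟩

lemma map_sigmaC_inf_baseChange (A : Submodule ℂ (ℂ ⊗[ℝ] V)) (p : Submodule ℝ V) :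
    (A ⊓ p.baseChange ℂ).map (sigmaC V) = A.map (sigmaC V) ⊓ p.baseChange ℂ := by
  apply le_antisymm
  · exact le_inf (Submodule.map_mono inf_le_left)
      (le_trans (Submodule.map_mono inf_le_right) (map_sigmaC_baseChange p).le)
  · rintro x ⟨⟨u, hu, rfl⟩, hx2⟩
    refine ⟨u, ⟨hu, ?_⟩, rfl⟩
    have : sigmaC V (sigmaC V u) ∈ (p.baseChange ℂ).map (sigmaC V) := ⟨_, hx2, rfl⟩
    rwa [sigmaC_sigmaC, map_sigmaC_baseChange] at this

lemma map_sigmaC_top : (⊤ : Submodule ℂ (ℂ ⊗[ℝ] V)).map (sigmaC V) = ⊤ := by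
  rw [Submodule.map_top, LinearMap.range_eq_top]
  exact sigmaC_surjective

lemma baseChange_mono {p q : Submodule ℝ V} (h : p ≤ q) :
    p.baseChange ℂ ≤ q.baseChange ℂ :=
  Submodule.baseChange_mono ℂ h

end MHSaux

namespace MHSaux

variable {V : Type*} [AddCommGroup V] [Module ℝ V]
variable (W : ℤ → Submodule ℝ V) (F : ℤ → Submodule ℂ (ℂ ⊗[ℝ] V))

/-- complexified weight filtration -/
noncomputable def Wc (n : ℤ) : Submodule ℂ (ℂ ⊗[ℝ] V) := (W n).baseChange ℂ

/-- conjugate Hodge filtration -/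
noncomputable def sF (q : ℤ) : Submodule ℂ (ℂ ⊗[ℝ] V) := (F q).map (sigmaC V)

/-- tail part of the Deligne splitting -/
noncomputable def Kf (n q : ℤ) : Submodule ℂ (ℂ ⊗[ℝ] V) :=
  ⨆ i : ℕ, sF F (q-1-i) ⊓ Wc W (n-2-i)

noncomputable def Jf (p q : ℤ) : Submodule ℂ (ℂ ⊗[ℝ] V) :=
  (sF F q ⊓ Wc W (p+q)) ⊔ Kf W F (p+q) q

/-- The Deligne bigrading `I^{p,q}`. -/
noncomputable def If (p q : ℤ) : Submodule ℂ (ℂ ⊗[ℝ] V) :=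
  F p ⊓ Wc W (p+q) ⊓ Jf W F p q

noncomputable def Ap (n p : ℤ) : Submodule ℂ (ℂ ⊗[ℝ] V) := (F p ⊓ Wc W n) ⊔ Wc W (n-1)
noncomputable def Bp (n q : ℤ) : Submodule ℂ (ℂ ⊗[ℝ] V) := (sF F q ⊓ Wc W n) ⊔ Wc W (n-1)

section ctx

variable {W F} (h : IsMixedHodgeStructure V W F)
include h

lemma Wc_mono : Monotone (Wc W) := fun _ _ hmn => baseChange_mono (h.1 hmn)

lemma Wc_bot : ∀ n ≤ h.2.1.choose, Wc W n = ⊥ := fun n hn => by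
  rw [Wc, h.2.1.choose_spec n hn, Submodule.baseChange_bot]

lemma Wc_top : ∀ n ≥ h.2.2.1.choose, Wc W n = ⊤ := fun n hn => by
  rw [Wc, h.2.2.1.choose_spec n hn, Submodule.baseChange_top]

lemma F_anti : Antitone F := antitone_int_of_succ_le h.2.2.2.1

lemma sF_anti : Antitone (sF F) := fun _ _ hmn => Submodule.map_mono (F_anti h hmn)

lemma F_top : ∀ p ≤ h.2.2.2.2.1.choose, F p = ⊤ := h.2.2.2.2.1.choose_spec

lemma F_bot : ∀ p ≥ h.2.2.2.2.2.1.choose, F p = ⊥ := h.2.2.2.2.2.1.choose_spec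

lemma sF_top : ∀ p ≤ h.2.2.2.2.1.choose, sF F p = ⊤ := fun p hp => by
  rw [sF, F_top h p hp, map_sigmaC_top]

lemma sF_bot : ∀ p ≥ h.2.2.2.2.2.1.choose, sF F p = ⊥ := fun p hp => by
  rw [sF, F_bot h p hp, Submodule.map_bot]

lemma hH1 (n p : ℤ) : Ap W F n p ⊓ Bp W F n (n - p + 1) = Wc W (n-1) := by
  have := (h.2.2.2.2.2.2 n p).1
  rwa [map_sigmaC_inf_baseChange] at this

lemma hH2 (n p : ℤ) : Ap W F n p ⊔ Bp W F n (n - p + 1) = Wc W n := by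
  have := (h.2.2.2.2.2.2 n p).2
  rw [map_sigmaC_inf_baseChange] at this
  have e : ∀ a b c : Submodule ℂ (ℂ ⊗[ℝ] V), (a ⊔ c) ⊔ (b ⊔ c) = (a ⊔ b) ⊔ c :=
    fun a b c => by rw [sup_sup_sup_comm, sup_idem]
  simp only [Ap, Bp, Wc, sF, e]
  exact this

end ctx

lemma Kf_le_Wc (n q : ℤ) (hmono : Monotone (Wc W)) : Kf W F n q ≤ Wc W (n-2) :=
  iSup_le fun i => le_trans inf_le_right (hmono (by omega))

lemma Kf_rec (n q : ℤ) : Kf W F n q = (sF F (q-1) ⊓ Wc W (n-2)) ⊔ Kf W F (n-1) (q-1) := by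
  apply le_antisymm
  · refine iSup_le fun i => ?_
    cases i with
    | zero => exact le_sup_of_le_left (by norm_num)
    | succ j =>
      refine le_sup_of_le_right (le_iSup_of_le j (le_of_eq ?_))
      congr 2 <;> push_cast <;> ring
  · refine sup_le (le_iSup_of_le 0 (le_of_eq (by norm_num))) (iSup_le fun j => le_iSup_of_le (j+1) (le_of_eq ?_))
    congr 2 <;> push_cast <;> ring

lemma If_le_F (p q : ℤ) : If W F p q ≤ F p := le_trans inf_le_left inf_le_left

lemma If_le_Wc (p q : ℤ) : If W F p q ≤ Wc W (p+q) := le_trans inf_le_left inf_le_right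

lemma If_le_Jf (p q : ℤ) : If W F p q ≤ Jf W F p q := inf_le_right

lemma If_le_Ap (p q : ℤ) : If W F p q ≤ Ap W F (p+q) p :=
  le_sup_of_le_left (le_inf (If_le_F W F p q) (If_le_Wc W F p q))

lemma If_le_Bp (p q : ℤ) (hmono : Monotone (Wc W)) : If W F p q ≤ Bp W F (p+q) q :=
  le_trans (If_le_Jf W F p q)
    (sup_le le_sup_left
      (le_sup_of_le_right (le_trans (Kf_le_Wc W F _ _ hmono) (hmono (by omega)))))

end MHSaux

namespace MHSaux

variable {V : Type*} [AddCommGroup V] [Module ℝ V]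
variable {W : ℤ → Submodule ℝ V} {F : ℤ → Submodule ℂ (ℂ ⊗[ℝ] V)}

lemma If_inf_Wc_eq_bot (h : IsMixedHodgeStructure V W F) (p q : ℤ) :
    If W F p q ⊓ Wc W (p + q - 1) = ⊥ := by
  rw [eq_bot_iff]
  rintro x ⟨hxI, hxW⟩
  have hxF : x ∈ F p := If_le_F W F p q hxI
  have key : ∀ t : ℕ, x ∈ Wc W (p+q-1-t) ∧
      ∃ y ∈ sF F (q-t), ∃ z ∈ Kf W F (p+q-t) (q-t), x = y + z := by
    intro t
    induction t with
    | zero =>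
      refine ⟨by simpa using hxW, ?_⟩
      obtain ⟨y, hy, z, hz, hxyz⟩ := Submodule.mem_sup.mp (If_le_Jf W F p q hxI)
      exact ⟨y, by simpa using hy.1, z, by simpa using hz, hxyz.symm⟩
    | succ t iht =>
      obtain ⟨hxWt, y, hy, z, hz, hxyz⟩ := iht
      have hzW : z ∈ Wc W (p+q-1-t-1) := by
        have := Kf_le_Wc W F (p+q-t) (q-t) (Wc_mono h) hz
        exact Wc_mono h (by omega) this
      have hyW : y ∈ Wc W (p+q-1-t) := by
        have hy' : y = x - z := by rw [hxyz]; abel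
        rw [hy']
        exact Submodule.sub_mem _ hxWt (Wc_mono h (by omega) hzW)
      have hxA : x ∈ Ap W F (p+q-1-t) p := Submodule.mem_sup_left ⟨hxF, hxWt⟩
      have hxB : x ∈ Bp W F (p+q-1-t) ((p+q-1-t) - p + 1) := by
        have hq : (p+q-1-t) - p + 1 = q - t := by ring
        rw [hq, Bp, hxyz]
        exact Submodule.add_mem_sup (Submodule.mem_inf.mpr ⟨hy, hyW⟩) hzW
      have hxW' : x ∈ Wc W (p+q-1-t-1) := by
        rw [← hH1 h (p+q-1-t) p]; exact ⟨hxA, hxB⟩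
      rw [Kf_rec] at hz
      obtain ⟨z₁, hz₁, z₂, hz₂, hzz⟩ := Submodule.mem_sup.mp hz
      refine ⟨by push_cast; convert hxW' using 2; ring, y + z₁, ?_, z₂, ?_, ?_⟩
      · have : y + z₁ ∈ sF F (q-t-1) :=
          Submodule.add_mem _ (sF_anti h (by omega) hy) hz₁.1
        convert this using 2; push_cast; ring
      · convert hz₂ using 2 <;> push_cast <;> ring
      · rw [hxyz, ← hzz]; abel
  obtain ⟨hmem, -⟩ := key (p + q - 1 - h.2.1.choose).toNat
  have : p + q - 1 - (p + q - 1 - h.2.1.choose).toNat ≤ h.2.1.choose := by omega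
  rw [Wc_bot h _ this] at hmem
  simpa using hmem

end MHSaux

namespace MHSaux

variable {V : Type*} [AddCommGroup V] [Module ℝ V]
variable (W : ℤ → Submodule ℝ V) (F : ℤ → Submodule ℂ (ℂ ⊗[ℝ] V))

/-- sup of the `I^{p,q}` with `p + q ≤ m` -/
noncomputable def SIf (m : ℤ) : Submodule ℂ (ℂ ⊗[ℝ] V) :=
  ⨆ (pr : ℤ × ℤ) (_ : pr.1 + pr.2 ≤ m), If W F pr.1 pr.2

lemma SIf_mono {m m' : ℤ} (hm : m ≤ m') : SIf W F m ≤ SIf W F m' :=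
  iSup_le fun pr => iSup_le fun hc => le_iSup_of_le pr (le_iSup_of_le (by omega) le_rfl)

lemma If_le_SIf {p q m : ℤ} (hc : p + q ≤ m) : If W F p q ≤ SIf W F m :=
  le_iSup_of_le (p, q) (le_iSup_of_le hc le_rfl)

variable {W F}

lemma term_le (h : IsMixedHodgeStructure V W F) (p q s' w : ℤ)
    (h1 : w ≤ p + q - 1) (h2 : w ≤ (p - 1) + s') :
    sF F s' ⊓ Wc W w ≤ (sF F q ⊓ Wc W (p + q - 1)) ⊔ Kf W F (p + q) q := by
  rcases le_or_gt q s' with hs | hs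
  · exact le_sup_of_le_left (inf_le_inf (sF_anti h hs) (Wc_mono h h1))
  · refine le_sup_of_le_right (le_iSup_of_le (q - 1 - s').toNat ?_)
    have e : q - 1 - ((q - 1 - s').toNat : ℤ) = s' := by omega
    exact inf_le_inf (le_of_eq (by rw [e])) (Wc_mono h (by omega))

lemma If_le_L (h : IsMixedHodgeStructure V W F) (p q r s : ℤ) (hrs : r + s ≤ p + q - 1) :
    If W F r s ≤
      (F p ⊓ Wc W (p + q - 1)) ⊔ ((sF F q ⊓ Wc W (p + q - 1)) ⊔ Kf W F (p + q) q) := by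
  rcases le_or_gt p r with hr | hr
  · refine le_sup_of_le_left (le_inf ?_ ?_)
    · exact (If_le_F W F r s).trans (F_anti h hr)
    · exact (If_le_Wc W F r s).trans (Wc_mono h (by omega))
  · refine le_trans (If_le_Jf W F r s) (le_sup_of_le_right (sup_le ?_ ?_))
    · exact term_le h p q s (r + s) (by omega) (by omega)
    · exact iSup_le fun i => term_le h p q (s - 1 - i) (r + s - 2 - i) (by omega) (by omega)

lemma ApBp_le (h : IsMixedHodgeStructure V W F) (p q : ℤ)
    (hIH : Wc W (p + q - 1) ≤ SIf W F (p + q - 1)) :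
    Ap W F (p + q) p ⊓ Bp W F (p + q) q ≤ If W F p q ⊔ Wc W (p + q - 1) := by
  have hL : Wc W (p + q - 1) ≤
      (F p ⊓ Wc W (p + q - 1)) ⊔ ((sF F q ⊓ Wc W (p + q - 1)) ⊔ Kf W F (p + q) q) :=
    hIH.trans (iSup_le fun pr => iSup_le fun hc => If_le_L h p q pr.1 pr.2 hc)
  rintro x ⟨hxA, hxB⟩
  obtain ⟨u, hu, w, hw, hx1⟩ := Submodule.mem_sup.mp hxA
  obtain ⟨y, hy, w', hw', hx2⟩ := Submodule.mem_sup.mp hxB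
  have hv : u - y ∈ Wc W (p + q - 1) := by
    have h3 : u - y = w' - w := by
      have h4 : u + w = y + w' := hx1.trans hx2.symm
      have := sub_eq_sub_iff_add_eq_add (a := u) (b := y) (c := w') (d := w)
      rw [this, h4]; abel
    rw [h3]; exact Submodule.sub_mem _ hw' hw
  obtain ⟨a, ha, bc, hbc, habc⟩ := Submodule.mem_sup.mp (hL hv)
  obtain ⟨b, hb, c, hc, hbc'⟩ := Submodule.mem_sup.mp hbc
  have h1 : u - a ∈ F p := Submodule.sub_mem _ hu.1 ha.1
  have h2 : u - a ∈ Wc W (p + q) := Submodule.sub_mem _ hu.2 (Wc_mono h (by omega) ha.2)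
  have h3 : u - a ∈ Jf W F p q := by
    have e : u - a = (y + b) + c := by
      have : a + bc = u - y := habc
      rw [← hbc'] at this
      have e2 : u = a + (b + c) + y := by rw [this]; abel
      rw [e2]; abel
    rw [e]
    refine Submodule.add_mem_sup ?_ hc
    exact ⟨Submodule.add_mem _ hy.1 hb.1, Submodule.add_mem _ hy.2 (Wc_mono h (by omega) hb.2)⟩
  have hx : x = (u - a) + (a + w) := by rw [← hx1]; abel
  rw [hx]
  exact Submodule.add_mem_sup (⟨⟨h1, h2⟩, h3⟩ : _ ∈ If W F p q)
    (Submodule.add_mem _ ha.2 hw)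

lemma Ap_anti (h : IsMixedHodgeStructure V W F) (m : ℤ) {p p' : ℤ} (hp : p ≤ p') :
    Ap W F m p' ≤ Ap W F m p :=
  sup_le_sup_right (inf_le_inf_right _ (F_anti h hp)) _

lemma Ap_le_span (h : IsMixedHodgeStructure V W F) (m : ℤ) (p : ℤ) :
    Ap W F m p ≤ (⨆ r : ℤ, (Ap W F m r ⊓ Bp W F m (m - r))) ⊔ Wc W (m - 1) := by
  set b := h.2.2.2.2.2.1.choose with hb
  have hbot : ∀ r ≥ b, Ap W F m r = Wc W (m - 1) := by
    intro r hr
    rw [Ap, F_bot h r hr, bot_inf_eq, bot_sup_eq]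
  have claim : ∀ k : ℕ, Ap W F m (b - k) ≤
      (⨆ r : ℤ, (Ap W F m r ⊓ Bp W F m (m - r))) ⊔ Wc W (m - 1) := by
    intro k
    induction k with
    | zero => rw [show b - ((0:ℕ):ℤ) = b by omega, hbot b le_rfl]; exact le_sup_right
    | succ k ih =>
      set r : ℤ := b - ((k:ℕ) + 1 : ℕ) with hr
      have hrk : r + 1 = b - (k:ℕ) := by rw [hr]; push_cast; ring
      have hApWc : Ap W F m r ≤ Wc W m := sup_le inf_le_right (Wc_mono h (by omega))
      have hsub : Ap W F m r ≤ Ap W F m (r + 1) ⊔ Bp W F m (m - r) := by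
        have hH := hH2 h m (r + 1)
        rw [show m - (r + 1) + 1 = m - r from by ring] at hH
        rw [hH]; exact hApWc
      have hmod : (Ap W F m (r + 1) ⊔ Bp W F m (m - r)) ⊓ Ap W F m r
          = Ap W F m (r + 1) ⊔ (Bp W F m (m - r) ⊓ Ap W F m r) :=
        sup_inf_assoc_of_le _ (Ap_anti h m (by omega))
      have hle : Ap W F m r ≤ Ap W F m (r + 1) ⊔ (Bp W F m (m - r) ⊓ Ap W F m r) := by
        rw [← hmod]; exact le_inf hsub le_rfl
      refine hle.trans (sup_le ?_ ?_)
      · rw [hrk]; exact ih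
      · exact le_sup_of_le_left (le_iSup_of_le r (by rw [inf_comm]))
  rcases le_or_gt b p with hp | hp
  · rw [hbot p hp]; exact le_sup_right
  · have := claim (b - p).toNat
    rwa [show b - ((b - p).toNat : ℤ) = p from by omega] at this

lemma Wc_le_SIf (h : IsMixedHodgeStructure V W F) (m : ℤ) : Wc W m ≤ SIf W F m := by
  set a := h.2.1.choose with ha
  have claim : ∀ k : ℕ, ∀ m : ℤ, m ≤ a + k → Wc W m ≤ SIf W F m := by
    intro k
    induction k with
    | zero => intro m hm; rw [Wc_bot h m (by omega)]; exact bot_le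
    | succ k ih =>
      intro m hm
      rcases le_or_gt m (a + k) with hm' | hm'
      · exact ih m hm'
      · have hIH : Wc W (m - 1) ≤ SIf W F (m - 1) := ih (m - 1) (by omega)
        -- Wc m = Ap m p₀ for small p₀
        set p0 : ℤ := min h.2.2.2.2.1.choose (m + 1) with hp0
        have hFtop : F p0 = ⊤ := F_top h p0 (by omega)
        have hWcm : Wc W m = Ap W F m p0 := by
          rw [Ap, hFtop, top_inf_eq]
          exact (sup_eq_left.mpr (Wc_mono h (by omega))).symm
        rw [hWcm]
        refine (Ap_le_span h m p0).trans (sup_le (iSup_le fun r => ?_) ?_)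
        · have h1 : Ap W F m r ⊓ Bp W F m (m - r) ≤ If W F r (m - r) ⊔ Wc W (m - 1) := by
            have := ApBp_le h r (m - r) (by rw [show r + (m - r) - 1 = m - 1 from by ring]; exact hIH)
            rwa [show r + (m - r) = m from by ring] at this
          refine h1.trans (sup_le ?_ ?_)
          · exact If_le_SIf W F (by omega)
          · exact hIH.trans (SIf_mono W F (by omega))
        · exact hIH.trans (SIf_mono W F (by omega))
  exact claim (m - a).toNat m (by omega)

end MHSaux

namespace MHSaux

variable {V : Type*} [AddCommGroup V] [Module ℝ V]
variable {W : ℤ → Submodule ℝ V} {F : ℤ → Submodule ℂ (ℂ ⊗[ℝ] V)}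

lemma grind (h : IsMixedHodgeStructure V W F) (n : ℤ) (s : Finset ℤ) (c : ℤ → ℂ ⊗[ℝ] V)
    (hc : ∀ p ∈ s, c p ∈ Ap W F n p ⊓ Bp W F n (n - p))
    (hsum : (∑ p ∈ s, c p) ∈ Wc W (n - 1)) :
    ∀ p ∈ s, c p ∈ Wc W (n - 1) := by
  classical
  induction s using Finset.induction_on_min with
  | empty => intro p hp; exact absurd hp (Finset.notMem_empty p)
  | insert a s hlt ih =>
    have hanot : a ∉ s := fun ha => lt_irrefl a (hlt a ha)
    rw [Finset.sum_insert hanot] at hsum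
    have hsummem : (∑ p ∈ s, c p) ∈ Ap W F n (a + 1) :=
      Submodule.sum_mem _ fun b hb =>
        Ap_anti h n (by have := hlt b hb; omega)
          (hc b (Finset.mem_insert_of_mem hb)).1
    have hca : c a ∈ Ap W F n (a + 1) := by
      have e : c a = (c a + ∑ p ∈ s, c p) - ∑ p ∈ s, c p := by abel
      rw [e]
      exact Submodule.sub_mem _ (le_sup_right (a := F (a+1) ⊓ Wc W n) hsum) hsummem
    have hcb : c a ∈ Bp W F n (n - (a + 1) + 1) := by
      rw [show n - (a + 1) + 1 = n - a from by ring]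
      exact (hc a (Finset.mem_insert_self a s)).2
    have hawc : c a ∈ Wc W (n - 1) := by
      rw [← hH1 h n (a + 1)]; exact ⟨hca, hcb⟩
    have hsum' : (∑ p ∈ s, c p) ∈ Wc W (n - 1) := by
      have e : (∑ p ∈ s, c p) = (c a + ∑ p ∈ s, c p) - c a := by abel
      rw [e]; exact Submodule.sub_mem _ hsum hawc
    intro p hp
    rcases Finset.mem_insert.mp hp with rfl | hp'
    · exact hawc
    · exact ih (fun b hb => hc b (Finset.mem_insert_of_mem hb)) hsum' p hp'

lemma If_unique (h : IsMixedHodgeStructure V W F) (n : ℤ) (s : Finset (ℤ × ℤ))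
    (g : ℤ × ℤ → ℂ ⊗[ℝ] V)
    (hg : ∀ pq ∈ s, g pq ∈ If W F pq.1 pq.2)
    (hn : ∀ pq ∈ s, pq.1 + pq.2 ≤ n)
    (hsum : ∑ pq ∈ s, g pq = 0) :
    ∀ pq ∈ s, g pq = 0 := by
  classical
  set a := h.2.1.choose with ha
  have claim : ∀ k : ℕ, ∀ n : ℤ, n ≤ a + k → ∀ s : Finset (ℤ × ℤ), ∀ g : ℤ × ℤ → ℂ ⊗[ℝ] V,
      (∀ pq ∈ s, g pq ∈ If W F pq.1 pq.2) → (∀ pq ∈ s, pq.1 + pq.2 ≤ n) →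
      (∑ pq ∈ s, g pq = 0) → ∀ pq ∈ s, g pq = 0 := by
    intro k
    induction k with
    | zero =>
      intro n hn s g hg hle _ pq hpq
      have h1 : g pq ∈ Wc W (pq.1 + pq.2) := If_le_Wc W F pq.1 pq.2 (hg pq hpq)
      have h2 : g pq ∈ Wc W a := Wc_mono h (by have := hle pq hpq; omega) h1
      rw [Wc_bot h a le_rfl] at h2
      simpa using h2
    | succ k ih =>
      intro n hn s g hg hle hsum
      rcases le_or_gt n (a + k) with hn' | hn'
      · exact ih n hn' s g hg hle hsum
      · set s1 : Finset (ℤ × ℤ) := s.filter (fun pq => pq.1 + pq.2 = n) with hs1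
        set s2 : Finset (ℤ × ℤ) := s.filter (fun pq => ¬ (pq.1 + pq.2 = n)) with hs2
        have hsplit : ∑ pq ∈ s1, g pq + ∑ pq ∈ s2, g pq = 0 := by
          rw [hs1, hs2, Finset.sum_filter_add_sum_filter_not]; exact hsum
        have hs2mem : ∀ pq ∈ s2, g pq ∈ Wc W (n - 1) := by
          intro pq hpq
          rw [hs2, Finset.mem_filter] at hpq
          exact Wc_mono h (by have := hle pq hpq.1; have := hpq.2; omega)
            (If_le_Wc W F pq.1 pq.2 (hg pq hpq.1))
        have hsum2 : (∑ pq ∈ s2, g pq) ∈ Wc W (n - 1) := Submodule.sum_mem _ hs2mem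
        -- s1 handling via grind
        set s1' : Finset ℤ := s1.image Prod.fst with hs1'
        set c : ℤ → ℂ ⊗[ℝ] V := fun p => g (p, n - p) with hc
        have hs1eq : ∀ pq ∈ s1, (pq.1, n - pq.1) = pq := by
          intro pq hpq
          have hmem := Finset.mem_filter.mp hpq
          have h2 : pq.2 = n - pq.1 := by have := hmem.2; omega
          cases pq; simp_all
        have hsum1eq : ∑ p ∈ s1', c p = ∑ pq ∈ s1, g pq := by
          rw [hs1', Finset.sum_image ?_]
          · refine Finset.sum_congr rfl fun pq hpq => ?_
            rw [hc]; simp only []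
            rw [hs1eq pq hpq]
          · intro x hx y hy hxy
            have ex := hs1eq x hx
            have ey := hs1eq y hy
            rw [← ex, ← ey, hxy]
        have hcmem : ∀ p ∈ s1', c p ∈ Ap W F n p ⊓ Bp W F n (n - p) := by
          intro p hp
          obtain ⟨pq, hpq, hfst⟩ := Finset.mem_image.mp hp
          have hmem := Finset.mem_filter.mp hpq
          have hgpq := hg pq hmem.1
          have hA := If_le_Ap W F pq.1 pq.2 hgpq
          have hB := If_le_Bp W F pq.1 pq.2 (Wc_mono h) hgpq
          rw [show pq.1 + pq.2 = n from hmem.2] at hA hB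
          have he : c p = g pq := by
            rw [hc]; simp only []; rw [← hfst, hs1eq pq hpq]
          rw [he, ← hfst, show n - pq.1 = pq.2 from by have := hmem.2; omega]
          exact ⟨hA, hB⟩
        have hsum1 : (∑ p ∈ s1', c p) ∈ Wc W (n - 1) := by
          rw [hsum1eq, eq_neg_of_add_eq_zero_left hsplit]
          exact Submodule.neg_mem _ hsum2
        have hczero := grind h n s1' c hcmem hsum1
        have hs1zero : ∀ pq ∈ s1, g pq = 0 := by
          intro pq hpq
          have hmem := Finset.mem_filter.mp hpq
          have h1 : g pq ∈ Wc W (pq.1 + pq.2 - 1) := by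
            have hz := hczero pq.1 (Finset.mem_image_of_mem _ hpq)
            have he : c pq.1 = g pq := by rw [hc]; simp only []; rw [hs1eq pq hpq]
            rw [he] at hz
            rw [show pq.1 + pq.2 - 1 = n - 1 from by have := hmem.2; omega]
            exact hz
          have h0 := If_inf_Wc_eq_bot h pq.1 pq.2
          have hmem2 : g pq ∈ If W F pq.1 pq.2 ⊓ Wc W (pq.1 + pq.2 - 1) := ⟨hg pq hmem.1, h1⟩
          rw [h0] at hmem2
          simpa using hmem2
        have hsum2' : ∑ pq ∈ s2, g pq = 0 := by
          have hz : ∑ pq ∈ s1, g pq = 0 := Finset.sum_eq_zero hs1zero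
          rw [hz, zero_add] at hsplit
          exact hsplit
        have hs2zero := ih (n - 1) (by omega) s2 g
          (fun pq hpq => hg pq (Finset.mem_filter.mp hpq).1)
          (fun pq hpq => by
            have h1 := hle pq (Finset.mem_filter.mp hpq).1
            have h2 := (Finset.mem_filter.mp hpq).2
            omega)
          hsum2'
        intro pq hpq
        by_cases hcase : pq.1 + pq.2 = n
        · exact hs1zero pq (Finset.mem_filter.mpr ⟨hpq, hcase⟩)
        · exact hs2zero pq (Finset.mem_filter.mpr ⟨hpq, hcase⟩)
  exact claim (n - a).toNat n (by omega) s g hg hn hsum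

end MHSaux

namespace MHSaux

variable {V V' : Type*} [AddCommGroup V] [Module ℝ V] [AddCommGroup V'] [Module ℝ V']

/-- real part retraction of the complexification -/
noncomputable def ReT (V : Type*) [AddCommGroup V] [Module ℝ V] : (ℂ ⊗[ℝ] V) →ₗ[ℝ] V :=
  (TensorProduct.lid ℝ V).toLinearMap ∘ₗ TensorProduct.map Complex.reLm LinearMap.id

lemma ReT_tmul (z : ℂ) (v : V) : ReT V (z ⊗ₜ[ℝ] v) = z.re • v := by
  simp [ReT]

lemma ReT_mem {p : Submodule ℝ V} {x : ℂ ⊗[ℝ] V} (hx : x ∈ p.baseChange ℂ) :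
    ReT V x ∈ p := by
  have key : ∀ c : ℂ, ReT V (c • x) ∈ p := by
    refine Submodule.span_induction
      (p := fun y _ => ∀ c : ℂ, ReT V (c • y) ∈ p) ?_ ?_ ?_ ?_ (Submodule.baseChange_eq_span ℂ p ▸ hx)
    · rintro y ⟨m, hm, rfl⟩ c
      have : c • ((TensorProduct.mk ℝ ℂ V) 1 m) = c ⊗ₜ[ℝ] m := by
        simp [TensorProduct.mk_apply, TensorProduct.smul_tmul', smul_eq_mul]
      rw [this, ReT_tmul]
      exact Submodule.smul_mem _ _ hm
    · intro c; rw [smul_zero, map_zero]; exact Submodule.zero_mem p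
    · intro y z _ _ hy hz c
      rw [smul_add, map_add]
      exact Submodule.add_mem _ (hy c) (hz c)
    · intro a y _ hy c
      rw [smul_smul]
      exact hy (c * a)
  simpa using key 1

variable (f : V →ₗ[ℝ] V')

lemma fc_sigma (x : ℂ ⊗[ℝ] V) :
    f.baseChange ℂ (sigmaC V x) = sigmaC V' (f.baseChange ℂ x) := by
  induction x using TensorProduct.induction_on with
  | zero => simp
  | tmul z v =>
    rw [sigmaC_tmul, LinearMap.baseChange_tmul, LinearMap.baseChange_tmul, sigmaC_tmul]
  | add x y hx hy => simp only [map_add, hx, hy]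

lemma ReT_fc (x : ℂ ⊗[ℝ] V) : ReT V' (f.baseChange ℂ x) = f (ReT V x) := by
  induction x using TensorProduct.induction_on with
  | zero => simp
  | tmul z v => rw [LinearMap.baseChange_tmul, ReT_tmul, ReT_tmul, map_smul]
  | add x y hx hy => simp only [map_add, hx, hy]

variable {W : ℤ → Submodule ℝ V} {W' : ℤ → Submodule ℝ V'}
variable {F : ℤ → Submodule ℂ (ℂ ⊗[ℝ] V)} {F' : ℤ → Submodule ℂ (ℂ ⊗[ℝ] V')}

lemma map_fc_Wc (hfW : ∀ n : ℤ, (W n).map f ≤ W' n) (n : ℤ) :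
    (Wc W n).map (f.baseChange ℂ) ≤ Wc W' n := by
  rw [Wc, Wc, Submodule.baseChange_eq_span, Submodule.map_span]
  refine Submodule.span_le.mpr ?_
  rintro - ⟨-, ⟨m, hm, rfl⟩, rfl⟩
  have : f.baseChange ℂ ((TensorProduct.mk ℝ ℂ V) 1 m) = (1 : ℂ) ⊗ₜ[ℝ] f m := by
    simp [TensorProduct.mk_apply]
  rw [this]
  exact Submodule.tmul_mem_baseChange_of_mem 1 (hfW n ⟨m, hm, rfl⟩)

lemma map_fc_sF (hfF : ∀ p : ℤ, (F p).map (f.baseChange ℂ) ≤ F' p) (q : ℤ) :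
    (sF F q).map (f.baseChange ℂ) ≤ sF F' q := by
  rintro - ⟨-, ⟨u, hu, rfl⟩, rfl⟩
  exact ⟨f.baseChange ℂ u, hfF q ⟨u, hu, rfl⟩, (fc_sigma f u).symm⟩

lemma map_fc_If (hfW : ∀ n : ℤ, (W n).map f ≤ W' n)
    (hfF : ∀ p : ℤ, (F p).map (f.baseChange ℂ) ≤ F' p) (p q : ℤ) :
    (If W F p q).map (f.baseChange ℂ) ≤ If W' F' p q := by
  refine le_inf (le_inf ?_ ?_) ?_
  · exact (Submodule.map_mono (le_trans inf_le_left inf_le_left)).trans (hfF p)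
  · exact (Submodule.map_mono (le_trans inf_le_left inf_le_right)).trans (map_fc_Wc f hfW _)
  · refine (Submodule.map_mono inf_le_right).trans ?_
    rw [Jf, Submodule.map_sup]
    refine sup_le ?_ ?_
    · refine le_sup_of_le_left (le_inf ?_ ?_)
      · exact (Submodule.map_mono inf_le_left).trans (map_fc_sF f hfF q)
      · exact (Submodule.map_mono inf_le_right).trans (map_fc_Wc f hfW _)
    · rw [Kf, Submodule.map_iSup]
      refine le_sup_of_le_right (iSup_le fun i => le_iSup_of_le i (le_inf ?_ ?_))
      · exact (Submodule.map_mono inf_le_left).trans (map_fc_sF f hfF _)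
      · exact (Submodule.map_mono inf_le_right).trans (map_fc_Wc f hfW _)

end MHSaux

namespace MHSaux

variable {V : Type*} [AddCommGroup V] [Module ℝ V]
variable {W : ℤ → Submodule ℝ V} {F : ℤ → Submodule ℂ (ℂ ⊗[ℝ] V)}

lemma exists_decomp {m : ℤ} {x : ℂ ⊗[ℝ] V} (hx : x ∈ SIf W F m) :
    ∃ (s : Finset (ℤ × ℤ)) (g : ℤ × ℤ → ℂ ⊗[ℝ] V),
      (∀ pq ∈ s, g pq ∈ If W F pq.1 pq.2) ∧ (∀ pq ∈ s, pq.1 + pq.2 ≤ m) ∧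
      ∑ pq ∈ s, g pq = x := by
  classical
  rw [SIf, iSup_subtype'] at hx
  obtain ⟨d, hd, hdsum⟩ := (Submodule.mem_iSup_iff_exists_finsupp _ x).mp hx
  refine ⟨d.support.image Subtype.val,
    fun pq => if hc : pq.1 + pq.2 ≤ m then d ⟨pq, hc⟩ else 0, ?_, ?_, ?_⟩
  · intro pq _
    show (if hc : pq.1 + pq.2 ≤ m then d ⟨pq, hc⟩ else 0) ∈ If W F pq.1 pq.2
    by_cases hc : pq.1 + pq.2 ≤ m
    · rw [dif_pos hc]; exact hd ⟨pq, hc⟩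
    · rw [dif_neg hc]; exact Submodule.zero_mem _
  · rintro pq hpq
    obtain ⟨i, _, rfl⟩ := Finset.mem_image.mp hpq
    exact i.2
  · rw [Finset.sum_image (fun a _ b _ hab => Subtype.ext hab)]
    rw [← hdsum, Finsupp.sum]
    refine Finset.sum_congr rfl fun i _ => ?_
    show (if hc : (i : ℤ × ℤ).1 + (i : ℤ × ℤ).2 ≤ m then d ⟨(i : ℤ × ℤ), hc⟩ else 0) = d i
    rw [dif_pos i.2]

end MHSaux


/-- Every morphism of mixed Hodge structures is strictly compatible with
the weight filtrations: `f(W_n) = f(V) ⊓ W'_n` for every `n`. -/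

theorem mhs_morphism_strict_weight (V V' : Type*)
    [AddCommGroup V] [Module ℝ V] [FiniteDimensional ℝ V]
    [AddCommGroup V'] [Module ℝ V'] [FiniteDimensional ℝ V']
    (W : ℤ → Submodule ℝ V) (F : ℤ → Submodule ℂ (ℂ ⊗[ℝ] V))
    (W' : ℤ → Submodule ℝ V') (F' : ℤ → Submodule ℂ (ℂ ⊗[ℝ] V'))
    (hWF : IsMixedHodgeStructure V W F) (hWF' : IsMixedHodgeStructure V' W' F')
    (f : V →ₗ[ℝ] V')
    (hfW : ∀ n : ℤ, (W n).map f ≤ W' n)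
    (hfF : ∀ p : ℤ, (F p).map (f.baseChange ℂ) ≤ F' p) :
    ∀ n : ℤ, (W n).map f = LinearMap.range f ⊓ W' n := by
  classical
  open MHSaux in
  intro n
  apply le_antisymm
  · rintro - ⟨v, hv, rfl⟩
    exact ⟨⟨v, rfl⟩, hfW n ⟨v, hv, rfl⟩⟩
  · rintro v' ⟨⟨v, rfl⟩, hv'⟩
    set fc := f.baseChange ℂ with hfc
    set M : ℤ := max hWF.2.2.1.choose n with hM
    have hxtop : (1:ℂ) ⊗ₜ[ℝ] v ∈ MHSaux.Wc W M := by
      rw [MHSaux.Wc_top hWF M (le_max_left _ _)]; trivial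
    obtain ⟨s, g, hg, hgle, hgsum⟩ := MHSaux.exists_decomp (MHSaux.Wc_le_SIf hWF M hxtop)
    set s1 := s.filter (fun pq => pq.1 + pq.2 ≤ n) with hs1
    set s2 := s.filter (fun pq => ¬ (pq.1 + pq.2 ≤ n)) with hs2
    set u := ∑ pq ∈ s1, g pq with hu
    have huW : u ∈ MHSaux.Wc W n := by
      refine Submodule.sum_mem _ fun pq hpq => ?_
      have hmem := Finset.mem_filter.mp hpq
      exact MHSaux.Wc_mono hWF hmem.2 (MHSaux.If_le_Wc W F _ _ (hg pq hmem.1))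
    set T := ∑ pq ∈ s2, fc (g pq) with hT
    have hTeq : fc ((1:ℂ) ⊗ₜ[ℝ] v) - fc u = T := by
      rw [← hgsum, hu, hT, map_sum, map_sum]
      rw [← Finset.sum_filter_add_sum_filter_not s (fun pq => pq.1 + pq.2 ≤ n)
        (fun pq => fc (g pq))]
      rw [← hs1, ← hs2]
      abel
    have hTW : T ∈ MHSaux.Wc W' n := by
      rw [← hTeq]
      refine Submodule.sub_mem _ ?_ ?_
      · have : fc ((1:ℂ) ⊗ₜ[ℝ] v) = (1:ℂ) ⊗ₜ[ℝ] f v := by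
          rw [hfc]; exact LinearMap.baseChange_tmul _ _ _
        rw [this]
        exact Submodule.tmul_mem_baseChange_of_mem 1 hv'
      · exact MHSaux.map_fc_Wc f hfW n ⟨u, huW, rfl⟩
    obtain ⟨s3, e, he, hele, hesum⟩ := MHSaux.exists_decomp (MHSaux.Wc_le_SIf hWF' n hTW)
    set s4 := s2 ∪ s3 with hs4
    set g0 : ℤ × ℤ → ℂ ⊗[ℝ] V' := fun pq =>
      (if pq ∈ s2 then fc (g pq) else 0) - (if pq ∈ s3 then e pq else 0) with hg0
    have hz : ∀ pq ∈ s4, g0 pq = 0 := by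
      refine MHSaux.If_unique hWF' M s4 g0 ?_ ?_ ?_
      · intro pq _
        refine Submodule.sub_mem _ ?_ ?_
        · by_cases hc : pq ∈ s2
          · rw [if_pos hc]
            exact MHSaux.map_fc_If f hfW hfF pq.1 pq.2
              ⟨g pq, hg pq (Finset.mem_filter.mp hc).1, rfl⟩
          · rw [if_neg hc]; exact Submodule.zero_mem _
        · by_cases hc : pq ∈ s3
          · rw [if_pos hc]; exact he pq hc
          · rw [if_neg hc]; exact Submodule.zero_mem _
      · intro pq hpq
        rcases Finset.mem_union.mp hpq with hc | hc
        · exact le_trans (hgle pq (Finset.mem_filter.mp hc).1) le_rfl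
        · exact le_trans (hele pq hc) (le_max_right _ _)
      · rw [hg0]
        rw [Finset.sum_sub_distrib]
        have e1 : ∑ pq ∈ s4, (if pq ∈ s2 then fc (g pq) else 0) = T := by
          rw [Finset.sum_ite_mem, Finset.inter_eq_right.mpr Finset.subset_union_left, hT]
        have e2 : ∑ pq ∈ s4, (if pq ∈ s3 then e pq else 0) = T := by
          rw [Finset.sum_ite_mem, Finset.inter_eq_right.mpr Finset.subset_union_right, hesum]
        rw [e1, e2, sub_self]
    have hfcg : ∀ pq ∈ s2, fc (g pq) = 0 := by
      intro pq hpq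
      have hnot3 : pq ∉ s3 := by
        intro hc3
        have h1 := hele pq hc3
        have h2 := (Finset.mem_filter.mp hpq).2
        omega
      have := hz pq (Finset.mem_union_left _ hpq)
      rw [hg0] at this
      simp only [if_pos hpq, if_neg hnot3, sub_zero] at this
      exact this
    have hT0 : T = 0 := Finset.sum_eq_zero hfcg
    have hfc_eq : fc ((1:ℂ) ⊗ₜ[ℝ] v) = fc u := by
      rw [hT0] at hTeq
      exact sub_eq_zero.mp hTeq
    refine ⟨MHSaux.ReT V u, MHSaux.ReT_mem huW, ?_⟩
    have h5 : fc ((1:ℂ) ⊗ₜ[ℝ] v) = (1:ℂ) ⊗ₜ[ℝ] f v := by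
      rw [hfc]; exact LinearMap.baseChange_tmul _ _ _
    calc f (MHSaux.ReT V u) = MHSaux.ReT V' (fc u) := (MHSaux.ReT_fc f u).symm
      _ = MHSaux.ReT V' ((1:ℂ) ⊗ₜ[ℝ] f v) := by rw [← hfc_eq, h5]
      _ = f v := by rw [MHSaux.ReT_tmul]; simp
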